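/- Let x₁, …, x_N ∈ C²([0,T]; ℝ) with x₁(t) < x₂(t) < ⋯ < x_N(t) for all t (real-line setting), Rᵢ(t) = δ/(xᵢ(t) − x_{i−1}(t)) for i = 2, …, N, and B(r) = G'(r) r². Assume L ∈ C²(ℝ) with L'' > 0, G ∈ C¹((0,∞)) with G' nonnegative and nondecreasing on (0, ∞), and that the trajectories solve the Euler–Lagrange system with zero potential gradient on the real line: L''(ẋᵢ) ẍᵢ = N (B(R_{i+1}) − B(Rᵢ)) for 2 ≤ i ≤ N−1, L''(ẋ₁) ẍ₁ = N B(R₂), and L''(ẋ_N) ẍ_N = − N B(R_N). If U : [0, ∞) → ℝ is twice continuously differentiable, convex, and satisfies U(0) = 0, then the map t ↦ Σ_{i=2}^{N} U(Rᵢ(t)) (xᵢ(t) − x_{i−1}(t)) is convex on [0, T]. -/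

import Mathlib

open Set Finset
open Filter Topology

lemma deriv_nonneg_of_monotoneOn {g : ℝ → ℝ} {r g' : ℝ} (hr : 0 < r)
    (hm : MonotoneOn g (Ioi 0)) (hd : HasDerivAt g g' r) : 0 ≤ g' := by
  have h : HasDerivWithinAt g g' (Ioi r) r := hd.hasDerivWithinAt
  have ht : Tendsto (slope g r) (𝓝[Ioi r \ {r}] r) (𝓝 g') :=
    hasDerivWithinAt_iff_tendsto_slope.mp h
  rw [Set.diff_singleton_eq_self (by simp)] at ht
  refine ge_of_tendsto ht ?_
  filter_upwards [self_mem_nhdsWithin] with y hy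
  have hry : r < y := hy
  rw [slope_def_field]
  have := hm (mem_Ioi.mpr hr) (mem_Ioi.mpr (hr.trans hry)) hry.le
  exact div_nonneg (by linarith) (by linarith)

lemma abel_sum (m : ℕ) (φ a : ℕ → ℝ) :
    ∑ i ∈ Finset.Icc 2 (m+2), φ i * (a i - a (i-1))
      = φ (m+2) * a (m+2) - φ 2 * a 1
        + ∑ i ∈ Finset.Icc 2 (m+1), (φ i - φ (i+1)) * a i := by
  induction m with
  | zero => simp; ring
  | succ n ih =>
    have h1 : ∑ i ∈ Finset.Icc 2 (n+3), φ i * (a i - a (i-1))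
        = (∑ i ∈ Finset.Icc 2 (n+2), φ i * (a i - a (i-1)))
          + φ (n+3) * (a (n+3) - a (n+2)) := by
      rw [show n+3 = (n+2)+1 from rfl, Finset.sum_Icc_succ_top (by omega)]
      simp
    have h2 : ∑ i ∈ Finset.Icc 2 (n+2), (φ i - φ (i+1)) * a i
        = (∑ i ∈ Finset.Icc 2 (n+1), (φ i - φ (i+1)) * a i)
          + (φ (n+2) - φ (n+3)) * a (n+2) := by
      rw [show n+2 = (n+1)+1 from rfl, Finset.sum_Icc_succ_top (by omega)]
    rw [show n+1+2 = n+3 from rfl, show n+1+1 = n+2 from rfl, h1, ih, h2]; ring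

lemma U_hasDerivAt {U : ℝ → ℝ} (hU : ContDiffOn ℝ 2 U (Ici 0)) {r : ℝ} (hr : 0 < r) :
    HasDerivAt U (deriv U r) r :=
  ((hU.contDiffAt (Ici_mem_nhds hr)).differentiableAt (by norm_num)).hasDerivAt

lemma U'_hasDerivAt {U : ℝ → ℝ} (hU : ContDiffOn ℝ 2 U (Ici 0)) {r : ℝ} (hr : 0 < r) :
    HasDerivAt (deriv U) (deriv (deriv U) r) r := by
  have h1 : ContDiffOn ℝ 1 (deriv U) (Ioi 0) :=
    (hU.mono Ioi_subset_Ici_self).deriv_of_isOpen isOpen_Ioi (by norm_num)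
  exact ((h1.contDiffAt (Ioi_mem_nhds hr)).differentiableAt (by norm_num)).hasDerivAt

lemma U'_monotoneOn {U : ℝ → ℝ} (hU : ContDiffOn ℝ 2 U (Ici 0))
    (hUconv : ConvexOn ℝ (Ici 0) U) : MonotoneOn (deriv U) (Ioi 0) :=
  (hUconv.subset Ioi_subset_Ici_self (convex_Ioi 0)).monotoneOn_deriv
    fun r hr => ((hU.contDiffAt (Ici_mem_nhds hr)).differentiableAt (by norm_num))

lemma U''_nonneg {U : ℝ → ℝ} (hU : ContDiffOn ℝ 2 U (Ici 0))
    (hUconv : ConvexOn ℝ (Ici 0) U) {r : ℝ} (hr : 0 < r) :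
    0 ≤ deriv (deriv U) r :=
  deriv_nonneg_of_monotoneOn hr (U'_monotoneOn hU hUconv) (U'_hasDerivAt hU hr)

lemma phi_nonpos {U : ℝ → ℝ} (hU : ContDiffOn ℝ 2 U (Ici 0))
    (hUconv : ConvexOn ℝ (Ici 0) U) (hU0 : U 0 = 0) {r : ℝ} (hr : 0 < r) :
    U r - deriv U r * r ≤ 0 := by
  have h := hUconv.slope_le_deriv (Set.self_mem_Ici) (Set.mem_Ici.mpr hr.le) hr
    ((hU.contDiffAt (Ici_mem_nhds hr)).differentiableAt (by norm_num))
  rw [slope_def_field, hU0] at h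
  have := (div_le_iff₀ (by linarith : (0:ℝ) < r - 0)).mp h
  nlinarith

lemma phi_antitone {U : ℝ → ℝ} (hU : ContDiffOn ℝ 2 U (Ici 0))
    (hUconv : ConvexOn ℝ (Ici 0) U) {a b : ℝ} (ha : 0 < a) (hab : a ≤ b) :
    U b - deriv U b * b ≤ U a - deriv U a * a := by
  rcases eq_or_lt_of_le hab with rfl | h
  · exact le_rfl
  have hb : 0 < b := ha.trans h
  have hdb : DifferentiableAt ℝ U b :=
    (hU.contDiffAt (Ici_mem_nhds hb)).differentiableAt (by norm_num)
  have hsl := hUconv.slope_le_deriv ha.le hb.le h hdb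
  rw [slope_def_field] at hsl
  have h1 : U b - U a ≤ deriv U b * (b - a) := by
    have := (div_le_iff₀ (by linarith : (0:ℝ) < b - a)).mp hsl
    linarith
  have h2 : deriv U a ≤ deriv U b := U'_monotoneOn hU hUconv ha hb hab
  nlinarith

lemma term_hasDeriv1 {U : ℝ → ℝ} (hU : ContDiffOn ℝ 2 U (Ici 0)) {δ : ℝ} (hδ : 0 < δ)
    {f g : ℝ → ℝ} (hf : ContDiff ℝ 2 f) (hg : ContDiff ℝ 2 g) {t : ℝ} (ht : g t < f t) :
    HasDerivAt (fun s => U (δ / (f s - g s)) * (f s - g s))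
      ((U (δ / (f t - g t)) - deriv U (δ / (f t - g t)) * (δ / (f t - g t))) *
        (deriv f t - deriv g t)) t := by
  have hd : 0 < f t - g t := by linarith
  have hfd : HasDerivAt f (deriv f t) t :=
    ((hf.differentiable (by norm_num)) t).hasDerivAt
  have hgd : HasDerivAt g (deriv g t) t :=
    ((hg.differentiable (by norm_num)) t).hasDerivAt
  have hdd : HasDerivAt (fun s => f s - g s) (deriv f t - deriv g t) t := hfd.sub hgd
  have hR : HasDerivAt (fun s => δ / (f s - g s))
      ((0 * (f t - g t) - δ * (deriv f t - deriv g t)) / (f t - g t) ^ 2) t :=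
    (hasDerivAt_const t δ).div hdd hd.ne'
  have hr : 0 < δ / (f t - g t) := div_pos hδ hd
  have hUd : HasDerivAt U (deriv U (δ / (f t - g t))) (δ / (f t - g t)) :=
    U_hasDerivAt hU hr
  have h := (hUd.comp t hR).mul hdd
  refine h.congr_deriv ?_
  simp only [Function.comp_apply]
  field_simp
  ring

lemma term_hasDeriv2 {U : ℝ → ℝ} (hU : ContDiffOn ℝ 2 U (Ici 0)) {δ : ℝ} (hδ : 0 < δ)
    {f g : ℝ → ℝ} (hf : ContDiff ℝ 2 f) (hg : ContDiff ℝ 2 g) {t : ℝ} (ht : g t < f t) :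
    HasDerivAt (fun s => (U (δ / (f s - g s)) - deriv U (δ / (f s - g s)) * (δ / (f s - g s))) *
        (deriv f s - deriv g s))
      (deriv (deriv U) (δ / (f t - g t)) * (δ / (f t - g t)) * δ *
          (deriv f t - deriv g t) ^ 2 / (f t - g t) ^ 2
        + (U (δ / (f t - g t)) - deriv U (δ / (f t - g t)) * (δ / (f t - g t))) *
          (deriv (deriv f) t - deriv (deriv g) t)) t := by
  have hd : 0 < f t - g t := by linarith
  have hfd : HasDerivAt f (deriv f t) t :=
    ((hf.differentiable (by norm_num)) t).hasDerivAt
  have hgd : HasDerivAt g (deriv g t) t :=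
    ((hg.differentiable (by norm_num)) t).hasDerivAt
  have hdd : HasDerivAt (fun s => f s - g s) (deriv f t - deriv g t) t := hfd.sub hgd
  have hR : HasDerivAt (fun s => δ / (f s - g s))
      ((0 * (f t - g t) - δ * (deriv f t - deriv g t)) / (f t - g t) ^ 2) t :=
    (hasDerivAt_const t δ).div hdd hd.ne'
  have hr : 0 < δ / (f t - g t) := div_pos hδ hd
  have h1 := (U_hasDerivAt hU hr).comp t hR
  have h2 := (U'_hasDerivAt hU hr).comp t hR
  have h3 := (h1.sub (h2.mul hR))
  have hf' : ContDiff ℝ 1 (deriv f) :=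
    (contDiff_succ_iff_deriv.mp (by exact_mod_cast hf)).2.2
  have hg' : ContDiff ℝ 1 (deriv g) :=
    (contDiff_succ_iff_deriv.mp (by exact_mod_cast hg)).2.2
  have hfd2 : HasDerivAt (deriv f) (deriv (deriv f) t) t :=
    ((hf'.differentiable (by norm_num)) t).hasDerivAt
  have hgd2 : HasDerivAt (deriv g) (deriv (deriv g) t) t :=
    ((hg'.differentiable (by norm_num)) t).hasDerivAt
  have h := h3.mul (hfd2.sub hgd2)
  refine h.congr_deriv ?_
  simp only [Function.comp_apply, Pi.sub_apply, Pi.mul_apply]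
  field_simp
  ring


lemma nonneg_of_pos_mul {c y z : ℝ} (hc : 0 < c) (h : c * y = z) (hz : 0 ≤ z) : 0 ≤ y :=
  le_of_mul_le_mul_left (by rw [h, mul_zero]; exact hz) hc

lemma nonpos_of_pos_mul {c y z : ℝ} (hc : 0 < c) (h : c * y = z) (hz : z ≤ 0) : y ≤ 0 :=
  le_of_mul_le_mul_left (by rw [h, mul_zero]; exact hz) hc


/-- Discrete density `Rᵢ(t) = δ/(xᵢ(t) − x_{i−1}(t))`, `δ = 1/N`, real-line indexing by `ℕ`. -/
noncomputable def Rd (N : ℕ) (x : ℕ → ℝ → ℝ) (i : ℕ) (t : ℝ) : ℝ :=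
  ((1 : ℝ) / N) / (x i t - x (i - 1) t)

/-- Displacement convexity in the real-line setting: along solutions of the
Euler–Lagrange system with zero potential gradient (with vanishing boundary terms),
for any convex `U ∈ C²([0,∞))` with `U(0) = 0`, the map
`t ↦ Σ_{i=2}^N U(Rᵢ(t))(xᵢ(t) − x_{i−1}(t))` is convex on `[0,T]`. -/
theorem stmt_1
    (N : ℕ) (hN : 2 ≤ N) (T : ℝ) (hT : 0 < T)
    (x : ℕ → ℝ → ℝ)
    (hx : ∀ i, ContDiff ℝ 2 (x i))
    (hord : ∀ i, 1 ≤ i → i < N → ∀ t ∈ Icc (0:ℝ) T, x i t < x (i + 1) t)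
    (L : ℝ → ℝ) (hL : ContDiff ℝ 2 L)
    (hL'' : ∀ u, 0 < deriv (deriv L) u)
    (G : ℝ → ℝ) (hG : ContDiffOn ℝ 1 G (Ioi 0))
    (hG'nonneg : ∀ r ∈ Ioi (0:ℝ), 0 ≤ deriv G r)
    (hG'mono : MonotoneOn (deriv G) (Ioi 0))
    (hEL_mid : ∀ i, 2 ≤ i → i ≤ N - 1 → ∀ t ∈ Icc (0:ℝ) T,
      deriv (deriv L) (deriv (x i) t) * deriv (deriv (x i)) t =
        N * (deriv G (Rd N x (i + 1) t) * (Rd N x (i + 1) t) ^ 2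
          - deriv G (Rd N x i t) * (Rd N x i t) ^ 2))
    (hEL_first : ∀ t ∈ Icc (0:ℝ) T,
      deriv (deriv L) (deriv (x 1) t) * deriv (deriv (x 1)) t =
        N * (deriv G (Rd N x 2 t) * (Rd N x 2 t) ^ 2))
    (hEL_last : ∀ t ∈ Icc (0:ℝ) T,
      deriv (deriv L) (deriv (x N) t) * deriv (deriv (x N)) t =
        - (N * (deriv G (Rd N x N t) * (Rd N x N t) ^ 2)))
    (U : ℝ → ℝ) (hU : ContDiffOn ℝ 2 U (Ici 0))
    (hUconv : ConvexOn ℝ (Ici 0) U) (hU0 : U 0 = 0) :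
    ConvexOn ℝ (Icc (0:ℝ) T)
      (fun t => ∑ i ∈ Finset.Icc 2 N, U (Rd N x i t) * (x i t - x (i - 1) t)) := by
  have hNR : (0:ℝ) < N := by exact_mod_cast (by omega : 0 < N)
  have hδ : (0:ℝ) < 1 / N := by positivity
  -- gaps are positive on [0,T]
  have hgap : ∀ i, 2 ≤ i → i ≤ N → ∀ t ∈ Icc (0:ℝ) T, x (i-1) t < x i t := by
    intro i h2 hiN t ht
    have := hord (i-1) (by omega) (by omega) t ht
    rwa [Nat.sub_add_cancel (by omega)] at this
  have hRpos : ∀ i, 2 ≤ i → i ≤ N → ∀ t ∈ Icc (0:ℝ) T, 0 < Rd N x i t := by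
    intro i h2 hiN t ht
    exact div_pos hδ (by have := hgap i h2 hiN t ht; linarith)
  refine convexOn_of_hasDerivWithinAt2_nonneg (convex_Icc 0 T)
    (f' := fun s => ∑ i ∈ Finset.Icc 2 N,
      (U (Rd N x i s) - deriv U (Rd N x i s) * Rd N x i s) *
        (deriv (x i) s - deriv (x (i-1)) s))
    (f'' := fun s => ∑ i ∈ Finset.Icc 2 N,
      (deriv (deriv U) (Rd N x i s) * Rd N x i s * (1/N) *
          (deriv (x i) s - deriv (x (i-1)) s) ^ 2 / (x i s - x (i-1) s) ^ 2
        + (U (Rd N x i s) - deriv U (Rd N x i s) * Rd N x i s) *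
          (deriv (deriv (x i)) s - deriv (deriv (x (i-1))) s)))
    ?_ ?_ ?_ ?_
  · -- continuity
    apply continuousOn_finset_sum
    intro i hi
    obtain ⟨h2, hiN⟩ := Finset.mem_Icc.mp hi
    have hdc : ContinuousOn (fun s => x i s - x (i-1) s) (Icc 0 T) :=
      ((hx i).continuous.sub (hx (i-1)).continuous).continuousOn
    have hRc : ContinuousOn (fun s => Rd N x i s) (Icc 0 T) := by
      apply continuousOn_const.div hdc
      intro s hs
      have := hgap i h2 hiN s hs; linarith
    exact (hU.continuousOn.comp hRc fun s hs => (hRpos i h2 hiN s hs).le).mul hdc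
  · -- first derivative
    intro t htI
    rw [interior_Icc] at htI
    have ht : t ∈ Icc (0:ℝ) T := Ioo_subset_Icc_self htI
    apply HasDerivAt.hasDerivWithinAt
    apply HasDerivAt.fun_sum
    intro i hi
    obtain ⟨h2, hiN⟩ := Finset.mem_Icc.mp hi
    exact term_hasDeriv1 hU hδ (hx i) (hx (i-1)) (hgap i h2 hiN t ht)
  · -- second derivative
    intro t htI
    rw [interior_Icc] at htI
    have ht : t ∈ Icc (0:ℝ) T := Ioo_subset_Icc_self htI
    apply HasDerivAt.hasDerivWithinAt
    apply HasDerivAt.fun_sum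
    intro i hi
    obtain ⟨h2, hiN⟩ := Finset.mem_Icc.mp hi
    exact term_hasDeriv2 hU hδ (hx i) (hx (i-1)) (hgap i h2 hiN t ht)
  · -- nonnegativity of the second derivative
    intro t htI
    rw [interior_Icc] at htI
    have ht : t ∈ Icc (0:ℝ) T := Ioo_subset_Icc_self htI
    simp only [Finset.sum_add_distrib]
    have hA : 0 ≤ ∑ i ∈ Finset.Icc 2 N,
        deriv (deriv U) (Rd N x i t) * Rd N x i t * (1/N) *
          (deriv (x i) t - deriv (x (i-1)) t) ^ 2 / (x i t - x (i-1) t) ^ 2 := by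
      apply Finset.sum_nonneg
      intro i hi
      obtain ⟨h2, hiN⟩ := Finset.mem_Icc.mp hi
      have h1 : 0 ≤ deriv (deriv U) (Rd N x i t) :=
        U''_nonneg hU hUconv (hRpos i h2 hiN t ht)
      have h2' : 0 ≤ Rd N x i t := (hRpos i h2 hiN t ht).le
      have hδ' : (0:ℝ) ≤ 1/(N:ℝ) := hδ.le
      exact div_nonneg (mul_nonneg (mul_nonneg (mul_nonneg h1 h2') hδ') (sq_nonneg _))
        (sq_nonneg _)
    have hB : 0 ≤ ∑ i ∈ Finset.Icc 2 N,
        (U (Rd N x i t) - deriv U (Rd N x i t) * Rd N x i t) *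
          (deriv (deriv (x i)) t - deriv (deriv (x (i-1))) t) := by
      set Φ : ℕ → ℝ := fun i => U (Rd N x i t) - deriv U (Rd N x i t) * Rd N x i t with hΦ
      set a : ℕ → ℝ := fun j => deriv (deriv (x j)) t with ha
      have hΦnonpos : ∀ j, 2 ≤ j → j ≤ N → Φ j ≤ 0 := fun j hj1 hj2 =>
        phi_nonpos hU hUconv hU0 (hRpos j hj1 hj2 t ht)
      have hΦanti : ∀ j k, 2 ≤ j → j ≤ N → 2 ≤ k → k ≤ N →
          Rd N x j t ≤ Rd N x k t → Φ k ≤ Φ j := fun j k hj1 hj2 hk1 hk2 hle =>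
        phi_antitone hU hUconv (hRpos j hj1 hj2 t ht) hle
      have hBnn : ∀ j, 2 ≤ j → j ≤ N →
          0 ≤ deriv G (Rd N x j t) * (Rd N x j t) ^ 2 := fun j hj1 hj2 =>
        mul_nonneg (hG'nonneg _ (hRpos j hj1 hj2 t ht)) (sq_nonneg _)
      have hBmono : ∀ j k, 2 ≤ j → j ≤ N → 2 ≤ k → k ≤ N →
          Rd N x j t ≤ Rd N x k t →
          deriv G (Rd N x j t) * (Rd N x j t) ^ 2 ≤
            deriv G (Rd N x k t) * (Rd N x k t) ^ 2 := by
        intro j k hj1 hj2 hk1 hk2 hle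
        have hjp := hRpos j hj1 hj2 t ht
        have hkp := hRpos k hk1 hk2 t ht
        exact mul_le_mul (hG'mono (mem_Ioi.mpr hjp) (mem_Ioi.mpr hkp) hle)
          (pow_le_pow_left₀ hjp.le hle 2) (by positivity) (hG'nonneg _ hkp)
      obtain ⟨m, rfl⟩ : ∃ m, N = m + 2 := ⟨N - 2, by omega⟩
      show 0 ≤ ∑ i ∈ Finset.Icc 2 (m+2), Φ i * (a i - a (i-1))
      rw [abel_sum m Φ a]
      -- last term : Φ (m+2) * a (m+2) ≥ 0
      have hlast : 0 ≤ Φ (m+2) * a (m+2) := by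
        have hc := hL'' (deriv (x (m+2)) t)
        have haN : a (m+2) ≤ 0 :=
          nonpos_of_pos_mul hc (hEL_last t ht)
            (by have := hBnn (m+2) (by omega) le_rfl; nlinarith)
        nlinarith [hΦnonpos (m+2) (by omega) le_rfl, haN]
      -- first term : Φ 2 * a 1 ≤ 0
      have hfirst : Φ 2 * a 1 ≤ 0 := by
        have hc := hL'' (deriv (x 1) t)
        have ha1 : 0 ≤ a 1 :=
          nonneg_of_pos_mul hc (hEL_first t ht)
            (by have := hBnn 2 le_rfl (by omega); nlinarith)
        exact mul_nonpos_of_nonpos_of_nonneg (hΦnonpos 2 le_rfl (by omega)) ha1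
      -- middle terms
      have hmid : 0 ≤ ∑ i ∈ Finset.Icc 2 (m+1), (Φ i - Φ (i+1)) * a i := by
        apply Finset.sum_nonneg
        intro i hi
        obtain ⟨h2, hiN⟩ := Finset.mem_Icc.mp hi
        have hc := hL'' (deriv (x i) t)
        have hEL := hEL_mid i h2 (by omega) t ht
        rcases le_total (Rd (m+2) x i t) (Rd (m+2) x (i+1) t) with hle | hle
        · have hBle := hBmono i (i+1) h2 (by omega) (by omega) (by omega) hle
          have hai : 0 ≤ a i := nonneg_of_pos_mul hc hEL (mul_nonneg hNR.le (by linarith))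
          have hphile := hΦanti i (i+1) h2 (by omega) (by omega) (by omega) hle
          exact mul_nonneg (by linarith) hai
        · have hBle := hBmono (i+1) i (by omega) (by omega) h2 (by omega) hle
          have hai : a i ≤ 0 := nonpos_of_pos_mul hc hEL
            (by nlinarith [hNR.le])
          have hphile := hΦanti (i+1) i (by omega) (by omega) h2 (by omega) hle
          nlinarith [hphile, hai]
      linarith
    linarith
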